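/- Let s ∈ (0,1), v ∈ C^{2,β}(ℝ) for some β ∈ (0,1), and ū its Poisson extension ū(x,y) = ∫_ℝ H_s(ξ)v(x−yξ)dξ. Then the function w(x,y) := y^{1−2s}·∂_y ū(x,y) satisfies sup_{x∈ℝ, y>0} |w(x,y)| ≤ C·(‖v‖_{L^∞(ℝ)} + ‖v''‖_{L^∞(ℝ)}) for some C depending only on s. -/

import Mathlib

open MeasureTheory Filter Set Topology

/-- The Poisson extension of `v` in the upper half-plane. -/
noncomputable def poissonExt (s p : ℝ) (v : ℝ → ℝ) (x y : ℝ) : ℝ :=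
  ∫ ξ : ℝ, p * (1 + ξ ^ 2) ^ (-((1 + 2 * s) / 2)) * v (x - y * ξ)

/-- The kernel profile. -/
noncomputable def Gker (s ξ : ℝ) : ℝ := (1 + ξ ^ 2) ^ (-((1 + 2 * s) / 2))

/-- The derivative of `ξ ↦ ξ * Gker s ξ`. -/
noncomputable def Kker (s ξ : ℝ) : ℝ :=
  Gker s ξ - (1 + 2 * s) * ξ ^ 2 * (1 + ξ ^ 2) ^ (-((1 + 2 * s) / 2) - 1)

lemma one_add_sq_pos (ξ : ℝ) : (0:ℝ) < 1 + ξ ^ 2 := by positivity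

lemma Gker_pos (s ξ : ℝ) : 0 < Gker s ξ := Real.rpow_pos_of_pos (one_add_sq_pos ξ) _

lemma Gker_neg (s ξ : ℝ) : Gker s (-ξ) = Gker s ξ := by simp [Gker]

lemma Kker_neg (s ξ : ℝ) : Kker s (-ξ) = Kker s ξ := by simp [Kker, Gker]

lemma continuous_Gker (s : ℝ) : Continuous (Gker s) := by
  apply Continuous.rpow_const (by continuity)
  exact fun ξ => Or.inl (one_add_sq_pos ξ).ne'

lemma continuous_Kker (s : ℝ) : Continuous (Kker s) := by
  unfold Kker
  apply (continuous_Gker s).sub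
  apply Continuous.mul (by continuity)
  apply Continuous.rpow_const (by continuity)
  exact fun ξ => Or.inl (one_add_sq_pos ξ).ne'

lemma hasDerivAt_Gker (s ξ : ℝ) :
    HasDerivAt (Gker s)
      (2 * ξ * (-((1 + 2 * s) / 2)) * (1 + ξ ^ 2) ^ (-((1 + 2 * s) / 2) - 1)) ξ := by
  have h1 : HasDerivAt (fun ξ : ℝ => 1 + ξ ^ 2) (2 * ξ) ξ := by
    simpa using (hasDerivAt_pow 2 ξ).const_add 1
  exact h1.rpow_const (Or.inl (one_add_sq_pos ξ).ne')

lemma hasDerivAt_xG (s ξ : ℝ) :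
    HasDerivAt (fun ξ => ξ * Gker s ξ) (Kker s ξ) ξ := by
  have := (hasDerivAt_id ξ).mul (hasDerivAt_Gker s ξ)
  refine this.congr_deriv ?_
  unfold Kker Gker
  simp only [id_eq, one_mul]
  ring

lemma Kker_abs_le (s : ℝ) (hs : s ∈ Set.Ioo (0:ℝ) 1) (ξ : ℝ) :
    |Kker s ξ| ≤ 4 * Gker s ξ := by
  have hpos := one_add_sq_pos ξ
  have hG := Gker_pos s ξ
  have hsplit : (1 + ξ ^ 2 : ℝ) ^ (-((1 + 2 * s) / 2) - 1) = Gker s ξ / (1 + ξ ^ 2) := by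
    rw [Real.rpow_sub hpos, Real.rpow_one]; rfl
  have h2s : (0:ℝ) < 1 + 2 * s := by have := hs.1; linarith
  have hB0 : 0 ≤ (1 + 2 * s) * ξ ^ 2 * ((1 + ξ ^ 2 : ℝ) ^ (-((1 + 2 * s) / 2) - 1)) := by
    apply mul_nonneg (mul_nonneg h2s.le (sq_nonneg ξ)) (Real.rpow_nonneg hpos.le _)
  have hB : (1 + 2 * s) * ξ ^ 2 * ((1 + ξ ^ 2 : ℝ) ^ (-((1 + 2 * s) / 2) - 1)) ≤ 3 * Gker s ξ := by
    rw [hsplit, ← mul_div_assoc, div_le_iff₀ hpos]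
    nlinarith [hs.2, sq_nonneg ξ, mul_nonneg (sq_nonneg ξ) hG.le, mul_pos hG hpos]
  have habs : |Kker s ξ| ≤ |Gker s ξ| +
      |(1 + 2 * s) * ξ ^ 2 * ((1 + ξ ^ 2 : ℝ) ^ (-((1 + 2 * s) / 2) - 1))| := by
    unfold Kker
    exact abs_sub _ _
  rw [abs_of_pos hG, abs_of_nonneg hB0] at habs
  linarith

/-- `Gker s ξ ≤ (ξ^2)^(-(1+2s)/2) = |ξ|^{-(1+2s)}` for `ξ ≠ 0`. -/
lemma Gker_le_rpow (s : ℝ) (hs : 0 < s) {ξ : ℝ} (hξ : ξ ≠ 0) :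
    Gker s ξ ≤ |ξ| ^ (-(1 + 2 * s)) := by
  have h1 : Gker s ξ ≤ (ξ ^ 2 : ℝ) ^ (-((1 + 2 * s) / 2)) := by
    apply Real.rpow_le_rpow_of_nonpos (by positivity) (by linarith [sq_nonneg ξ])
    have : (0:ℝ) < 1 + 2 * s := by linarith
    linarith
  calc Gker s ξ ≤ (ξ ^ 2 : ℝ) ^ (-((1 + 2 * s) / 2)) := h1
    _ = |ξ| ^ (-(1 + 2 * s)) := by
        rw [← sq_abs, ← Real.rpow_natCast |ξ| 2, ← Real.rpow_mul (abs_nonneg ξ)]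
        ring_nf

lemma Gker_anti (s : ℝ) (hs : 0 < s) {α β : ℝ} (h : α ^ 2 ≤ β ^ 2) :
    Gker s β ≤ Gker s α := by
  apply Real.rpow_le_rpow_of_nonpos (by positivity) (by linarith)
  linarith

lemma integrable_Gker (s p : ℝ) (hp : 0 < p)
    (hnorm : ∫ ξ : ℝ, p * (1 + ξ ^ 2) ^ (-((1 + 2 * s) / 2)) = 1) :
    Integrable (Gker s) := by
  have h := integrable_of_integral_eq_one hnorm
  have := h.const_mul p⁻¹
  show Integrable (fun ξ => Gker s ξ)
  simpa [Gker, ← mul_assoc, inv_mul_cancel₀ hp.ne'] using this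

/-- Second order Taylor bound. -/
lemma taylor_bound {v : ℝ → ℝ} (hv : ContDiff ℝ 2 v) {M₂ : ℝ}
    (hM₂ : ∀ x : ℝ, |iteratedDeriv 2 v x| ≤ M₂) (b c : ℝ) :
    |v b - v c - (b - c) * deriv v c| ≤ M₂ * (b - c) ^ 2 := by
  have hd1 : Differentiable ℝ v := hv.differentiable (by norm_num)
  have hv' : ContDiff ℝ 1 (deriv v) :=
    (contDiff_succ_iff_deriv.mp (show ContDiff ℝ (1 + 1 : ℕ) v by exact_mod_cast hv)).2.2
  have hd2 : Differentiable ℝ (deriv v) := hv'.differentiable one_ne_zero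
  have hiter : ∀ t : ℝ, deriv (deriv v) t = iteratedDeriv 2 v t := by
    intro t; rw [iteratedDeriv_succ, iteratedDeriv_one]
  have step1 : ∀ t : ℝ, |deriv v t - deriv v c| ≤ M₂ * |t - c| := by
    intro t
    have := convex_univ.norm_image_sub_le_of_norm_hasDerivWithin_le
      (f := deriv v) (f' := fun x => deriv (deriv v) x) (C := M₂) (s := Set.univ)
      (fun x _ => (hd2 x).hasDerivAt.hasDerivWithinAt)
      (fun x _ => by simp only [Real.norm_eq_abs]; rw [hiter]; exact hM₂ x)
      (Set.mem_univ c) (Set.mem_univ t)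
    simpa [Real.norm_eq_abs] using this
  set g : ℝ → ℝ := fun t => v t - v c - (t - c) * deriv v c with hg
  have hgd : ∀ t : ℝ, HasDerivAt g (deriv v t - deriv v c) t := by
    intro t
    have h1 : HasDerivAt (fun t => v t) (deriv v t) t := (hd1 t).hasDerivAt
    have h2 : HasDerivAt (fun t : ℝ => v c + (t - c) * deriv v c) (deriv v c) t := by
      simpa using (((hasDerivAt_id t).sub_const c).mul_const (deriv v c)).const_add (v c)
    have := h1.sub h2
    simpa [hg, sub_sub, Pi.sub_def] using this
  have step2 := (convex_uIcc c b).norm_image_sub_le_of_norm_hasDerivWithin_le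
      (f := g) (f' := fun t => deriv v t - deriv v c) (C := M₂ * |b - c|) (s := Set.uIcc c b)
      (fun t _ => (hgd t).hasDerivWithinAt)
      (fun t ht => by
        rw [Real.norm_eq_abs]
        calc |deriv v t - deriv v c| ≤ M₂ * |t - c| := step1 t
          _ ≤ M₂ * |b - c| := by
              have h0 : 0 ≤ M₂ := le_trans (abs_nonneg _) (hM₂ 0)
              exact mul_le_mul_of_nonneg_left (abs_sub_left_of_mem_uIcc ht) h0)
      Set.left_mem_uIcc Set.right_mem_uIcc
  have hgc : g c = 0 := by simp [hg]
  rw [hgc, sub_zero, Real.norm_eq_abs, Real.norm_eq_abs] at step2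
  calc |g b| ≤ M₂ * |b - c| * |b - c| := step2
    _ = M₂ * (b - c) ^ 2 := by rw [mul_assoc, ← abs_mul, ← sq, abs_sq]

/-- The key derivative formula. -/
lemma hasDerivAt_poissonExt (s p : ℝ) (hs : s ∈ Set.Ioo (0:ℝ) 1) (hp : 0 < p)
    (hnorm : ∫ ξ : ℝ, p * (1 + ξ ^ 2) ^ (-((1 + 2 * s) / 2)) = 1)
    {v : ℝ → ℝ} (hv : Continuous v) {M₀ : ℝ} (hM₀ : ∀ x : ℝ, |v x| ≤ M₀)
    (x : ℝ) {y : ℝ} (hy : 0 < y) :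
    HasDerivAt (fun t : ℝ => poissonExt s p v x t)
      (-(p / y) * ∫ ξ : ℝ, Kker s ξ * v (x - y * ξ)) y := by
  obtain ⟨hs0, hs1⟩ := hs
  have hM0 : 0 ≤ M₀ := le_trans (abs_nonneg _) (hM₀ 0)
  have hGint : Integrable (Gker s) := integrable_Gker s p hp hnorm
  set F : ℝ → ℝ → ℝ := fun t r => p / t * Gker s (r / t) * v (x - r) with hF
  set F' : ℝ → ℝ → ℝ := fun t r => -(p / t ^ 2) * Kker s (r / t) * v (x - r) with hF'
  have hFcont : ∀ t : ℝ, Continuous (F t) := by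
    intro t
    exact (continuous_const.mul ((continuous_Gker s).comp (continuous_id.div_const t))).mul
      (hv.comp (continuous_const.sub continuous_id))
  have hF'cont : ∀ t : ℝ, Continuous (F' t) := by
    intro t
    exact (continuous_const.mul ((continuous_Kker s).comp (continuous_id.div_const t))).mul
      (hv.comp (continuous_const.sub continuous_id))
  -- the identity poissonExt = ∫ F t for t > 0
  have heq : ∀ t : ℝ, 0 < t → poissonExt s p v x t = ∫ r : ℝ, F t r := by
    intro t ht
    have h1 : ∀ ξ : ℝ, F t (t * ξ)
        = t⁻¹ * (p * (1 + ξ ^ 2) ^ (-((1 + 2 * s) / 2)) * v (x - t * ξ)) := by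
      intro ξ
      have hq : t * ξ / t = ξ := by field_simp
      simp only [hF, hq, Gker]
      ring
    have h2 : (∫ ξ : ℝ, F t (t * ξ)) = t⁻¹ * poissonExt s p v x t := by
      simp_rw [h1]
      rw [integral_const_mul]
      rfl
    rw [Measure.integral_comp_mul_left (fun r => F t r) t,
      abs_of_pos (inv_pos.mpr ht), smul_eq_mul] at h2
    exact (mul_left_cancel₀ (inv_ne_zero ht.ne') h2).symm
  -- pointwise derivative
  have hdiff : ∀ (r t : ℝ), 0 < t → HasDerivAt (fun t => F t r) (F' t r) t := by
    intro r t ht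
    have hinv : HasDerivAt (fun t : ℝ => r / t) (-(r / t ^ 2)) t := by
      have := (hasDerivAt_inv ht.ne').const_mul r
      refine this.congr_deriv ?_
      field_simp
    have hcompG : HasDerivAt (fun t : ℝ => Gker s (r / t))
        (2 * (r / t) * (-((1 + 2 * s) / 2)) * (1 + (r / t) ^ 2) ^ (-((1 + 2 * s) / 2) - 1)
          * (-(r / t ^ 2))) t :=
      (hasDerivAt_Gker s (r / t)).comp t hinv
    have hP : HasDerivAt (fun t : ℝ => p / t) (-(p / t ^ 2)) t := by
      have := (hasDerivAt_inv ht.ne').const_mul p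
      refine this.congr_deriv ?_
      field_simp
    have hmul := (hP.mul hcompG).mul_const (v (x - r))
    refine hmul.congr_deriv ?_
    simp only [hF', Kker, Gker]
    set A := ((1 + (r / t) ^ 2 : ℝ) ^ (-((1 + 2 * s) / 2))) with hA
    set B := ((1 + (r / t) ^ 2 : ℝ) ^ (-((1 + 2 * s) / 2) - 1)) with hB
    field_simp
    ring
  -- dominated differentiation
  have hball : ∀ t ∈ Metric.ball y (y / 2), 0 < t ∧ t < 3 * y / 2 := by
    intro t htb
    rw [Metric.mem_ball, Real.dist_eq, abs_sub_lt_iff] at htb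
    constructor <;> linarith [htb.1, htb.2]
  have key := hasDerivAt_integral_of_dominated_loc_of_deriv_le (μ := volume)
    (F := F) (F' := F') (x₀ := y)
    (bound := fun r => 16 * p * (M₀ + 1) / y ^ 2 * Gker s (2 / (3 * y) * r))
    (Metric.ball_mem_nhds y (half_pos hy))
    (Eventually.of_forall fun t => (hFcont t).aestronglyMeasurable)
    ?hFint
    ((hF'cont y).aestronglyMeasurable)
    ?hbound
    ?hbint
    (Eventually.of_forall fun r => fun t htb => hdiff r t (hball t htb).1)
  case hFint =>
    apply Integrable.mono ((hGint.comp_mul_left' (inv_ne_zero hy.ne')).const_mul (p / y * M₀))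
      (hFcont y).aestronglyMeasurable
    filter_upwards with r
    have hGpos := Gker_pos s (r / y)
    have hv0 := hM₀ (x - r)
    have habs0 := abs_nonneg (v (x - r))
    have hry : r / y = y⁻¹ * r := by field_simp
    simp only [hF, Real.norm_eq_abs, abs_mul]
    rw [abs_of_pos (div_pos hp hy), abs_of_pos hGpos, abs_of_nonneg hM0,
      abs_of_pos (Gker_pos s (y⁻¹ * r)), ← hry]
    have := mul_le_mul_of_nonneg_left hv0 (by positivity : (0:ℝ) ≤ p / y * Gker s (r / y))
    calc p / y * Gker s (r / y) * |v (x - r)| ≤ p / y * Gker s (r / y) * M₀ := this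
      _ = p / y * M₀ * Gker s (r / y) := by ring
  case hbound =>
    filter_upwards with r
    intro t htb
    obtain ⟨ht0, ht1⟩ := hball t htb
    have ht2 : y / 2 < t := by
      rw [Metric.mem_ball, Real.dist_eq, abs_sub_lt_iff] at htb
      linarith [htb.2]
    have hKb := Kker_abs_le s ⟨hs0, hs1⟩ (r / t)
    have hGanti : Gker s (r / t) ≤ Gker s (2 / (3 * y) * r) := by
      apply Gker_anti s hs0
      have e1 : (2 / (3 * y) * r) ^ 2 = 4 * r ^ 2 / (9 * y ^ 2) := by
        field_simp; ring
      have e2 : (r / t) ^ 2 = r ^ 2 / t ^ 2 := by rw [div_pow]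
      rw [e1, e2, div_le_div_iff₀ (by positivity) (by positivity)]
      nlinarith [sq_nonneg r, mul_pos (show (0:ℝ) < 3 * y - 2 * t by linarith)
        (show (0:ℝ) < 3 * y + 2 * t by linarith)]
    have hGpos := Gker_pos s (2 / (3 * y) * r)
    have hpt : p / t ^ 2 ≤ 4 * p / y ^ 2 := by
      rw [div_le_div_iff₀ (by positivity) (by positivity)]
      nlinarith [mul_pos (show (0:ℝ) < 2 * t - y by linarith)
        (show (0:ℝ) < 2 * t + y by linarith), hp.le, hp]
    simp only [hF', Real.norm_eq_abs, abs_mul, abs_neg]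
    rw [abs_of_pos (by positivity : (0:ℝ) < p / t ^ 2)]
    calc p / t ^ 2 * |Kker s (r / t)| * |v (x - r)|
        ≤ (4 * p / y ^ 2) * (4 * Gker s (2 / (3 * y) * r)) * (M₀ + 1) := by
          apply mul_le_mul
          · apply mul_le_mul hpt (hKb.trans (by linarith)) (abs_nonneg _) (by positivity)
          · linarith [hM₀ (x - r)]
          · exact abs_nonneg _
          · positivity
      _ = 16 * p * (M₀ + 1) / y ^ 2 * Gker s (2 / (3 * y) * r) := by ring
  case hbint =>
    exact (hGint.comp_mul_left' (by positivity : (2:ℝ) / (3 * y) ≠ 0)).const_mul _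
  obtain ⟨-, hkey⟩ := key
  -- identify the derivative value
  have hval : (∫ r : ℝ, F' y r) = -(p / y) * ∫ ξ : ℝ, Kker s ξ * v (x - y * ξ) := by
    have h1 : ∀ ξ : ℝ, F' y (y * ξ) = -(p / y ^ 2) * (Kker s ξ * v (x - y * ξ)) := by
      intro ξ
      have hq : y * ξ / y = ξ := by field_simp
      simp only [hF', hq]
      ring
    have h2 : (∫ ξ : ℝ, F' y (y * ξ)) = -(p / y ^ 2) * ∫ ξ : ℝ, Kker s ξ * v (x - y * ξ) := by
      simp_rw [h1]
      rw [integral_const_mul]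
    rw [Measure.integral_comp_mul_left (fun r => F' y r) y,
      abs_of_pos (inv_pos.mpr hy), smul_eq_mul] at h2
    have h3 := congrArg (fun z => y * z) h2
    simp only [← mul_assoc, mul_inv_cancel₀ hy.ne', one_mul] at h3
    rw [h3]
    field_simp
  rw [hval] at hkey
  apply hkey.congr_of_eventuallyEq
  filter_upwards [eventually_gt_nhds hy] with t ht
  exact heq t ht

set_option maxHeartbeats 1000000 in
theorem stmt_11 (s p : ℝ) (hs : s ∈ Set.Ioo (0 : ℝ) 1) (hp : 0 < p)
    (hnorm : ∫ ξ : ℝ, p * (1 + ξ ^ 2) ^ (-((1 + 2 * s) / 2)) = 1) :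
    ∃ C > 0, ∀ (v : ℝ → ℝ) (β : ℝ), β ∈ Set.Ioo (0 : ℝ) 1 → ContDiff ℝ 2 v →
      (∃ K : ℝ, ∀ a b : ℝ, |iteratedDeriv 2 v a - iteratedDeriv 2 v b| ≤ K * |a - b| ^ β) →
      ∀ M₀ M₂ : ℝ, (∀ x : ℝ, |v x| ≤ M₀) → (∀ x : ℝ, |iteratedDeriv 2 v x| ≤ M₂) →
      ∀ x y : ℝ, 0 < y →
        |y ^ (1 - 2 * s) * deriv (fun t : ℝ => poissonExt s p v x t) y| ≤ C * (M₀ + M₂) := by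
  obtain ⟨hs0, hs1⟩ := hs
  have hs2 : (0:ℝ) < 2 - 2 * s := by linarith
  refine ⟨p * (8 / (2 - 2 * s) + 2 + 4 / s), by positivity, ?_⟩
  intro v β hβ hv _ M₀ M₂ hM₀ hM₂ x y hy
  have hvc : Continuous v := hv.continuous
  have hM0 : 0 ≤ M₀ := le_trans (abs_nonneg _) (hM₀ 0)
  have hM2 : 0 ≤ M₂ := le_trans (abs_nonneg _) (hM₂ 0)
  have hGint := integrable_Gker s p hp hnorm
  have hder := hasDerivAt_poissonExt s p ⟨hs0, hs1⟩ hp hnorm hvc hM₀ x hy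
  rw [hder.deriv]
  set I := ∫ ξ : ℝ, Kker s ξ * v (x - y * ξ) with hIdef
  set r : ℝ := 1 / y with hrdef
  have hr : 0 < r := by positivity
  -- global integrability
  have hintgen : ∀ w : ℝ → ℝ, Continuous w → (∀ z, |w z| ≤ M₀) →
      Integrable (fun ξ : ℝ => Kker s ξ * w ξ) := by
    intro w hwc hwb
    apply Integrable.mono (hGint.const_mul (4 * M₀))
      ((continuous_Kker s).mul hwc).aestronglyMeasurable
    filter_upwards with ξ
    have hGpos := Gker_pos s ξ
    rw [Real.norm_eq_abs, Real.norm_eq_abs,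
      abs_of_nonneg (by nlinarith [Gker_pos s ξ] : (0:ℝ) ≤ 4 * M₀ * Gker s ξ), Pi.mul_apply, abs_mul]
    calc |Kker s ξ| * |w ξ| ≤ 4 * Gker s ξ * M₀ :=
          mul_le_mul (Kker_abs_le s ⟨hs0, hs1⟩ ξ) (hwb ξ) (abs_nonneg _)
            (by nlinarith [Gker_pos s ξ])
      _ = 4 * M₀ * Gker s ξ := by ring
  have hint : Integrable (fun ξ : ℝ => Kker s ξ * v (x - y * ξ)) :=
    hintgen _ (hvc.comp (continuous_const.sub (continuous_const.mul continuous_id)))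
      (fun z => hM₀ _)
  -- splitting into near and far
  have hsplitI : I = (∫ ξ in Icc (-r) r, Kker s ξ * v (x - y * ξ))
      + ∫ ξ in (Icc (-r) r)ᶜ, Kker s ξ * v (x - y * ξ) :=
    (integral_add_compl measurableSet_Icc hint).symm
  -- ### Near part
  set R : ℝ → ℝ := fun ξ => v (x - y * ξ) - v x - ((x - y * ξ) - x) * deriv v x with hRdef
  have hRcont : Continuous R := by
    apply Continuous.sub
    · exact (hvc.comp (continuous_const.sub (continuous_const.mul continuous_id))).sub
        continuous_const
    · exact (((continuous_const.sub (continuous_const.mul continuous_id)).sub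
        continuous_const).mul continuous_const)
  have hKii : IntervalIntegrable (Kker s) volume (-r) r :=
    (continuous_Kker s).intervalIntegrable _ _
  have hxKii : IntervalIntegrable (fun ξ => ξ * Kker s ξ) volume (-r) r :=
    (continuous_id.mul (continuous_Kker s)).intervalIntegrable _ _
  have hKRii : IntervalIntegrable (fun ξ => Kker s ξ * R ξ) volume (-r) r :=
    ((continuous_Kker s).mul hRcont).intervalIntegrable _ _
  have hftc : (∫ ξ in (-r)..r, Kker s ξ) = 2 * (r * Gker s r) := by
    rw [intervalIntegral.integral_eq_sub_of_hasDerivAt (fun ξ _ => hasDerivAt_xG s ξ) hKii]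
    rw [Gker_neg s r]
    ring
  have hodd : (∫ ξ in (-r)..r, ξ * Kker s ξ) = 0 := by
    have h1 := intervalIntegral.integral_comp_neg (a := -r) (b := r)
      (fun ξ => ξ * Kker s ξ)
    simp only [Kker_neg, neg_neg, neg_mul] at h1
    rw [intervalIntegral.integral_neg] at h1
    linarith
  have hNear : (∫ ξ in Icc (-r) r, Kker s ξ * v (x - y * ξ))
      = (∫ ξ in (-r)..r, Kker s ξ * R ξ) + v x * (2 * (r * Gker s r)) := by
    have hIcc : (∫ ξ in Icc (-r) r, Kker s ξ * v (x - y * ξ))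
        = ∫ ξ in (-r)..r, Kker s ξ * v (x - y * ξ) := by
      rw [intervalIntegral.integral_of_le (by linarith), ← integral_Icc_eq_integral_Ioc]
    rw [hIcc]
    calc (∫ ξ in (-r)..r, Kker s ξ * v (x - y * ξ))
        = ∫ ξ in (-r)..r, (Kker s ξ * R ξ
            + (v x * Kker s ξ - (y * deriv v x) * (ξ * Kker s ξ))) := by
          apply intervalIntegral.integral_congr
          intro ξ _
          simp only [hRdef]
          ring
      _ = (∫ ξ in (-r)..r, Kker s ξ * R ξ)
            + ((∫ ξ in (-r)..r, v x * Kker s ξ)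
              - ∫ ξ in (-r)..r, (y * deriv v x) * (ξ * Kker s ξ)) := by
          rw [intervalIntegral.integral_add hKRii ((hKii.const_mul _).sub (hxKii.const_mul _)),
            intervalIntegral.integral_sub (hKii.const_mul _) (hxKii.const_mul _)]
      _ = (∫ ξ in (-r)..r, Kker s ξ * R ξ) + v x * (2 * (r * Gker s r)) := by
          rw [intervalIntegral.integral_const_mul, intervalIntegral.integral_const_mul,
            hftc, hodd]
          ring
  -- pointwise Taylor bound
  have habsrpow : ∀ ξ : ℝ, ξ ≠ 0 → Gker s ξ * ξ ^ 2 ≤ |ξ| ^ (1 - 2 * s) := by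
    intro ξ hξ
    calc Gker s ξ * ξ ^ 2 ≤ |ξ| ^ (-(1 + 2 * s)) * ξ ^ 2 :=
          mul_le_mul_of_nonneg_right (Gker_le_rpow s hs0 hξ) (sq_nonneg ξ)
      _ = |ξ| ^ (1 - 2 * s) := by
          rw [← sq_abs ξ, ← Real.rpow_natCast |ξ| 2, ← Real.rpow_add (abs_pos.mpr hξ)]
          norm_num
          congr 1
          ring
  have hptwise : ∀ w : ℝ, w ≠ 0 → ‖Kker s w * R w‖ ≤ 4 * M₂ * y ^ 2 * |w| ^ (1 - 2 * s) := by
    intro w hw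
    have hRle : |R w| ≤ M₂ * (y ^ 2 * w ^ 2) := by
      have := taylor_bound hv hM₂ (x - y * w) x
      simp only [hRdef]
      convert this using 2 <;> ring
    rw [Real.norm_eq_abs, abs_mul]
    have hGpos := Gker_pos s w
    calc |Kker s w| * |R w| ≤ (4 * Gker s w) * (M₂ * (y ^ 2 * w ^ 2)) :=
          mul_le_mul (Kker_abs_le s ⟨hs0, hs1⟩ w) hRle (abs_nonneg _)
            (by nlinarith [Gker_pos s w])
      _ = 4 * M₂ * y ^ 2 * (Gker s w * w ^ 2) := by ring
      _ ≤ 4 * M₂ * y ^ 2 * |w| ^ (1 - 2 * s) :=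
          mul_le_mul_of_nonneg_left (habsrpow w hw) (by positivity)
  have hval0r : (∫ ξ in (0:ℝ)..r, ξ ^ (1 - 2 * s)) = r ^ (2 - 2 * s) / (2 - 2 * s) := by
    rw [integral_rpow (Or.inl (by linarith : (-1:ℝ) < 1 - 2 * s))]
    rw [Real.zero_rpow (by intro h; rw [show (1 - 2*s) + 1 = 2 - 2*s by ring] at h; linarith)]
    rw [show (1 - 2*s) + 1 = 2 - 2*s by ring]
    ring
  have hgii : IntervalIntegrable (fun ξ : ℝ => 4 * M₂ * y ^ 2 * ξ ^ (1 - 2 * s))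
      volume 0 r := (intervalIntegral.intervalIntegrable_rpow' (by linarith)).const_mul _
  have hgval : (∫ ξ in (0:ℝ)..r, 4 * M₂ * y ^ 2 * ξ ^ (1 - 2 * s))
      = 4 * M₂ * y ^ 2 * (r ^ (2 - 2 * s) / (2 - 2 * s)) := by
    rw [intervalIntegral.integral_const_mul, hval0r]
  have hb2 : |∫ ξ in (0:ℝ)..r, Kker s ξ * R ξ|
      ≤ 4 * M₂ * y ^ 2 * (r ^ (2 - 2 * s) / (2 - 2 * s)) := by
    have := intervalIntegral.norm_integral_le_abs_of_norm_le (μ := volume) (a := (0:ℝ)) (b := r)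
      (f := fun ξ => Kker s ξ * R ξ) (g := fun ξ => 4 * M₂ * y ^ 2 * ξ ^ (1 - 2 * s))
      ?_ hgii
    · rw [hgval, Real.norm_eq_abs,
        abs_of_nonneg (by positivity : (0:ℝ) ≤ 4 * M₂ * y ^ 2 * (r ^ (2 - 2 * s) / (2 - 2 * s)))] at this
      exact this
    · filter_upwards [ae_restrict_mem measurableSet_uIoc] with ξ hξ
      have hξ0 : 0 < ξ := by
        rw [Set.uIoc_of_le hr.le] at hξ
        exact hξ.1
      have := hptwise ξ hξ0.ne'
      rwa [abs_of_pos hξ0] at this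
  have hb1 : |∫ ξ in (-r)..(0:ℝ), Kker s ξ * R ξ|
      ≤ 4 * M₂ * y ^ 2 * (r ^ (2 - 2 * s) / (2 - 2 * s)) := by
    have hcn := intervalIntegral.integral_comp_neg (a := (0:ℝ)) (b := r)
      (fun ξ => Kker s ξ * R ξ)
    rw [neg_zero] at hcn
    rw [← hcn]
    have := intervalIntegral.norm_integral_le_abs_of_norm_le (μ := volume) (a := (0:ℝ)) (b := r)
      (f := fun ξ => Kker s (-ξ) * R (-ξ)) (g := fun ξ => 4 * M₂ * y ^ 2 * ξ ^ (1 - 2 * s))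
      ?_ hgii
    · rw [hgval, Real.norm_eq_abs,
        abs_of_nonneg (by positivity : (0:ℝ) ≤ 4 * M₂ * y ^ 2 * (r ^ (2 - 2 * s) / (2 - 2 * s)))] at this
      exact this
    · filter_upwards [ae_restrict_mem measurableSet_uIoc] with ξ hξ
      have hξ0 : 0 < ξ := by
        rw [Set.uIoc_of_le hr.le] at hξ
        exact hξ.1
      have h := hptwise (-ξ) (by simpa using hξ0.ne')
      rwa [abs_neg, abs_of_pos hξ0] at h
  have hTb : |∫ ξ in (-r)..r, Kker s ξ * R ξ|
      ≤ 8 * M₂ * y ^ 2 * (r ^ (2 - 2 * s) / (2 - 2 * s)) := by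
    have hsplitT := intervalIntegral.integral_add_adjacent_intervals
      (μ := volume) (a := -r) (b := 0) (c := r) (f := fun ξ => Kker s ξ * R ξ)
      (((continuous_Kker s).mul hRcont).intervalIntegrable _ _)
      (((continuous_Kker s).mul hRcont).intervalIntegrable _ _)
    rw [← hsplitT]
    calc |(∫ ξ in (-r)..(0:ℝ), Kker s ξ * R ξ) + ∫ ξ in (0:ℝ)..r, Kker s ξ * R ξ|
        ≤ |∫ ξ in (-r)..(0:ℝ), Kker s ξ * R ξ| + |∫ ξ in (0:ℝ)..r, Kker s ξ * R ξ| :=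
          abs_add_le _ _
      _ ≤ 8 * M₂ * y ^ 2 * (r ^ (2 - 2 * s) / (2 - 2 * s)) := by
          have := add_le_add hb1 hb2
          linarith
  -- ### Far part
  have hrpowint : IntegrableOn (fun ξ : ℝ => ξ ^ (-(1 + 2 * s))) (Ioi r) :=
    integrableOn_Ioi_rpow_of_lt (by linarith) hr
  have hrpowval : (∫ ξ in Ioi r, ξ ^ (-(1 + 2 * s))) = r ^ (-(2 * s)) / (2 * s) := by
    rw [integral_Ioi_rpow_of_lt (by linarith) hr]
    rw [show (-(1 + 2*s)) + 1 = -(2*s) by ring]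
    rw [div_eq_div_iff (by linarith) (by linarith)]
    ring
  have hfarIoi : ∀ w : ℝ → ℝ, Continuous w → (∀ z, |w z| ≤ M₀) →
      |∫ ξ in Ioi r, Kker s ξ * w ξ| ≤ 4 * M₀ * (r ^ (-(2 * s)) / (2 * s)) := by
    intro w hwc hwb
    have hwint := hintgen w hwc hwb
    calc |∫ ξ in Ioi r, Kker s ξ * w ξ| ≤ ∫ ξ in Ioi r, |Kker s ξ * w ξ| := by
          simpa only [Real.norm_eq_abs] using
            norm_integral_le_integral_norm (μ := volume.restrict (Ioi r))
              (fun ξ => Kker s ξ * w ξ)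
      _ ≤ ∫ ξ in Ioi r, 4 * M₀ * ξ ^ (-(1 + 2 * s)) := by
          apply setIntegral_mono_on hwint.abs.integrableOn
            (hrpowint.const_mul _) measurableSet_Ioi
          intro ξ hξ
          have hξr : r < ξ := hξ
          have hξ0 : 0 < ξ := hr.trans hξr
          rw [abs_mul]
          calc |Kker s ξ| * |w ξ| ≤ (4 * Gker s ξ) * M₀ :=
                mul_le_mul (Kker_abs_le s ⟨hs0, hs1⟩ ξ) (hwb ξ) (abs_nonneg _)
                  (by nlinarith [Gker_pos s ξ])
            _ ≤ 4 * M₀ * ξ ^ (-(1 + 2 * s)) := by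
                have := Gker_le_rpow s hs0 hξ0.ne'
                rw [abs_of_pos hξ0] at this
                nlinarith [Real.rpow_nonneg hξ0.le (-(1 + 2*s)), Gker_pos s ξ]
      _ = 4 * M₀ * (r ^ (-(2 * s)) / (2 * s)) := by
          rw [integral_const_mul, hrpowval]
  have hIoiBound : |∫ ξ in Ioi r, Kker s ξ * v (x - y * ξ)|
      ≤ 4 * M₀ * (r ^ (-(2 * s)) / (2 * s)) :=
    hfarIoi _ (hvc.comp (continuous_const.sub (continuous_const.mul continuous_id)))
      (fun z => hM₀ _)
  have hIioBound : |∫ ξ in Iio (-r), Kker s ξ * v (x - y * ξ)|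
      ≤ 4 * M₀ * (r ^ (-(2 * s)) / (2 * s)) := by
    have h1 : (∫ ξ in Iio (-r), Kker s ξ * v (x - y * ξ))
        = ∫ ξ in Iic (-r), Kker s ξ * v (x - y * ξ) :=
      setIntegral_congr_set Iio_ae_eq_Iic
    have h2 := integral_comp_neg_Ioi r (fun ξ => Kker s ξ * v (x - y * ξ))
    rw [h1, ← h2]
    have h3 : (∫ ξ in Ioi r, Kker s (-ξ) * v (x - y * -ξ))
        = ∫ ξ in Ioi r, Kker s ξ * v (x + y * ξ) := by
      apply setIntegral_congr_fun measurableSet_Ioi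
      intro ξ _
      simp only [Kker_neg]
      ring_nf
    rw [h3]
    exact hfarIoi _ (hvc.comp (continuous_const.add (continuous_const.mul continuous_id)))
      (fun z => hM₀ _)
  have hFar : |∫ ξ in (Icc (-r) r)ᶜ, Kker s ξ * v (x - y * ξ)|
      ≤ 8 * M₀ * (r ^ (-(2 * s)) / (2 * s)) := by
    have hdisj : Disjoint (Iio (-r)) (Ioi r) := by
      apply Set.disjoint_left.mpr
      intro ξ h1 h2
      simp only [Set.mem_Iio, Set.mem_Ioi] at h1 h2
      linarith
    have hIccC : (Icc (-r) r)ᶜ = Iio (-r) ∪ Ioi r := by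
      ext ξ
      simp only [Set.mem_compl_iff, Set.mem_Icc, not_and_or, not_le, Set.mem_union,
        Set.mem_Iio, Set.mem_Ioi]
    rw [hIccC, setIntegral_union hdisj measurableSet_Ioi
      hint.integrableOn hint.integrableOn]
    calc |(∫ ξ in Iio (-r), Kker s ξ * v (x - y * ξ))
          + ∫ ξ in Ioi r, Kker s ξ * v (x - y * ξ)|
        ≤ |∫ ξ in Iio (-r), Kker s ξ * v (x - y * ξ)|
          + |∫ ξ in Ioi r, Kker s ξ * v (x - y * ξ)| := abs_add_le _ _
      _ ≤ 8 * M₀ * (r ^ (-(2 * s)) / (2 * s)) := by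
          have := add_le_add hIioBound hIoiBound
          linarith
  -- ### rpow bookkeeping
  have hry : r = y⁻¹ := by rw [hrdef, one_div]
  have hA1 : y ^ (-(2 * s)) * (y ^ 2 * r ^ (2 - 2 * s)) = 1 := by
    rw [hry, Real.inv_rpow hy.le, ← Real.rpow_neg hy.le, ← Real.rpow_natCast y 2,
      ← Real.rpow_add hy, ← Real.rpow_add hy]
    rw [show (-(2 * s) + ((2:ℕ) + -(2 - 2 * s)) : ℝ) = 0 by push_cast; ring]
    exact Real.rpow_zero y
  have hA3 : y ^ (-(2 * s)) * r ^ (-(2 * s)) = 1 := by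
    rw [hry, Real.inv_rpow hy.le, ← Real.rpow_neg hy.le, ← Real.rpow_add hy]
    rw [show (-(2 * s) + -(-(2 * s)) : ℝ) = 0 by ring]
    exact Real.rpow_zero y
  have hA2 : y ^ (-(2 * s)) * (r * Gker s r) ≤ 1 := by
    have hG : Gker s r ≤ r ^ (-(1 + 2 * s)) := by
      have := Gker_le_rpow s hs0 hr.ne'
      rwa [abs_of_pos hr] at this
    have h1 : r * Gker s r ≤ r ^ (-(2 * s)) := by
      calc r * Gker s r ≤ r * r ^ (-(1 + 2 * s)) :=
            mul_le_mul_of_nonneg_left hG hr.le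
        _ = r ^ (-(2 * s)) := by
            nth_rewrite 1 [← Real.rpow_one r]
            rw [← Real.rpow_add hr]
            rw [show (1 + -(1 + 2 * s) : ℝ) = -(2 * s) by ring]
    calc y ^ (-(2 * s)) * (r * Gker s r) ≤ y ^ (-(2 * s)) * r ^ (-(2 * s)) :=
          mul_le_mul_of_nonneg_left h1 (Real.rpow_nonneg hy.le _)
      _ = 1 := hA3
  -- ### assemble
  have hyfact : y ^ (1 - 2 * s) * (p / y) = p * y ^ (-(2 * s)) := by
    rw [show (1 - 2 * s : ℝ) = -(2 * s) + 1 by ring, Real.rpow_add hy, Real.rpow_one]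
    field_simp
  have hypos : (0:ℝ) < y ^ (-(2 * s)) := Real.rpow_pos_of_pos hy _
  have habs : |y ^ (1 - 2 * s) * (-(p / y) * I)| = p * y ^ (-(2 * s)) * |I| := by
    rw [abs_mul, abs_mul, abs_neg, abs_of_pos (div_pos hp hy),
      abs_of_pos (Real.rpow_pos_of_pos hy _), ← mul_assoc, hyfact]
  rw [habs]
  -- |I| bound
  have hIb : |I| ≤ 8 * M₂ * y ^ 2 * (r ^ (2 - 2 * s) / (2 - 2 * s))
      + M₀ * (2 * (r * Gker s r)) + 8 * M₀ * (r ^ (-(2 * s)) / (2 * s)) := by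
    rw [hsplitI, hNear]
    have hvx : |v x * (2 * (r * Gker s r))| ≤ M₀ * (2 * (r * Gker s r)) := by
      rw [abs_mul]
      apply mul_le_mul (hM₀ x)
        (le_of_eq (abs_of_nonneg (by nlinarith [Gker_pos s r] : (0:ℝ) ≤ 2 * (r * Gker s r))))
        (abs_nonneg _) hM0
    calc |((∫ ξ in (-r)..r, Kker s ξ * R ξ) + v x * (2 * (r * Gker s r)))
          + ∫ ξ in (Icc (-r) r)ᶜ, Kker s ξ * v (x - y * ξ)|
        ≤ |∫ ξ in (-r)..r, Kker s ξ * R ξ| + |v x * (2 * (r * Gker s r))|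
          + |∫ ξ in (Icc (-r) r)ᶜ, Kker s ξ * v (x - y * ξ)| := by
          exact (abs_add_le _ _).trans (add_le_add_left (abs_add_le _ _) _)
      _ ≤ 8 * M₂ * y ^ 2 * (r ^ (2 - 2 * s) / (2 - 2 * s))
          + M₀ * (2 * (r * Gker s r)) + 8 * M₀ * (r ^ (-(2 * s)) / (2 * s)) := by
          exact add_le_add (add_le_add hTb hvx) hFar
  have hGrpos := Gker_pos s r
  have hrpow1 : (0:ℝ) ≤ r ^ (2 - 2 * s) := Real.rpow_nonneg hr.le _
  have hrpow2 : (0:ℝ) ≤ r ^ (-(2 * s)) := Real.rpow_nonneg hr.le _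
  calc p * y ^ (-(2 * s)) * |I|
      ≤ p * y ^ (-(2 * s)) * (8 * M₂ * y ^ 2 * (r ^ (2 - 2 * s) / (2 - 2 * s))
        + M₀ * (2 * (r * Gker s r)) + 8 * M₀ * (r ^ (-(2 * s)) / (2 * s))) :=
        mul_le_mul_of_nonneg_left hIb (by positivity)
    _ = (8 * p * M₂ / (2 - 2 * s)) * (y ^ (-(2 * s)) * (y ^ 2 * r ^ (2 - 2 * s)))
        + 2 * p * M₀ * (y ^ (-(2 * s)) * (r * Gker s r))
        + (4 * p * M₀ / s) * (y ^ (-(2 * s)) * r ^ (-(2 * s))) := by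
        field_simp
        ring
    _ ≤ (8 * p * M₂ / (2 - 2 * s)) * 1 + 2 * p * M₀ * 1 + (4 * p * M₀ / s) * 1 := by
        apply add_le_add (add_le_add ?_ ?_) ?_
        · rw [hA1]
        · exact mul_le_mul_of_nonneg_left hA2 (by positivity)
        · rw [hA3]
    _ ≤ p * (8 / (2 - 2 * s) + 2 + 4 / s) * (M₀ + M₂) := by
        rw [mul_one, mul_one, mul_one]
        have e1 : 8 * p * M₂ / (2 - 2 * s) ≤ 8 * p * (M₀ + M₂) / (2 - 2 * s) := by
          gcongr
          nlinarith
        have e2 : 2 * p * M₀ ≤ 2 * p * (M₀ + M₂) := by nlinarith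
        have e3 : 4 * p * M₀ / s ≤ 4 * p * (M₀ + M₂) / s := by
          gcongr
          nlinarith
        have : p * (8 / (2 - 2 * s) + 2 + 4 / s) * (M₀ + M₂)
            = 8 * p * (M₀ + M₂) / (2 - 2 * s) + 2 * p * (M₀ + M₂)
              + 4 * p * (M₀ + M₂) / s := by
          field_simp
        linarith
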